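/- Let K be a measurable space, p a natural number, and let Z^{i,j} : K → ℝ (i, j ∈ ℕ) be measurable functions such that for every x ∈ K and every N, the matrix (Z^{i,j}(x))_{i,j<N} is symmetric and positive semidefinite of rank at most p. Define p(x) = sup_N rank (Z^{i,j}(x))_{i,j<N} ∈ {0,1,…,p}. Then there exist measurable functions ζ^i : K → ℝ^p (i ∈ ℕ) such that for every x ∈ K and all i, j ∈ ℕ, Z^{i,j}(x) = ⟨ζ^i(x), ζ^j(x)⟩ (Euclidean inner product), and moreover the k-th coordinate of ζ^j(x) vanishes whenever k > p(x). -/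

import Mathlib

namespace Stmt6Aux
open scoped Matrix


/-- Quadratic form of an infinite matrix truncated at `N`. -/
noncomputable def Q (A : ℕ → ℕ → ℝ) (N : ℕ) (c : ℕ → ℝ) : ℝ :=
  ∑ i ∈ Finset.range N, ∑ j ∈ Finset.range N, c i * c j * A i j

def PSD (A : ℕ → ℕ → ℝ) : Prop := ∀ (N : ℕ) (c : ℕ → ℝ), 0 ≤ Q A N c

def IsSym (A : ℕ → ℕ → ℝ) : Prop := ∀ i j, A i j = A j i

lemma Q_mono {A : ℕ → ℕ → ℝ} {N M : ℕ} {c : ℕ → ℝ} (h : ∀ i, N ≤ i → c i = 0)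
    (hNM : N ≤ M) : Q A M c = Q A N c := by
  unfold Q
  have inner : ∀ i : ℕ, ∑ j ∈ Finset.range M, c i * c j * A i j
      = ∑ j ∈ Finset.range N, c i * c j * A i j := by
    intro i
    refine (Finset.sum_subset (Finset.range_subset_range.2 hNM) ?_).symm
    intro j _ hj
    rw [h j (by simpa using hj)]; ring
  simp_rw [inner]
  refine (Finset.sum_subset (Finset.range_subset_range.2 hNM) ?_).symm
  intro i _ hi
  have : c i = 0 := h i (by simpa using hi)
  simp [this]

lemma Q_single {A : ℕ → ℕ → ℝ} {m N : ℕ} (hm : m < N) :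
    Q A N (fun n => if n = m then 1 else 0) = A m m := by
  unfold Q
  rw [Finset.sum_eq_single m]
  · rw [Finset.sum_eq_single m]
    · simp
    · intro j _ hj; simp [hj]
    · intro h; exact absurd (Finset.mem_range.2 hm) h
  · intro i _ hi
    simp [hi]
  · intro h; exact absurd (Finset.mem_range.2 hm) h

lemma psd_cs {A : ℕ → ℕ → ℝ} (hA : PSD A) (hS : IsSym A) (N : ℕ) (c d : ℕ → ℝ) :
    (∑ i ∈ Finset.range N, ∑ j ∈ Finset.range N, c i * d j * A i j) ^ 2
      ≤ Q A N c * Q A N d := by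
  set B := ∑ i ∈ Finset.range N, ∑ j ∈ Finset.range N, c i * d j * A i j with hB
  have swap : ∑ i ∈ Finset.range N, ∑ j ∈ Finset.range N, d i * c j * A i j = B := by
    rw [Finset.sum_comm, hB]
    refine Finset.sum_congr rfl fun i _ => Finset.sum_congr rfl fun j _ => ?_
    rw [hS j i]; ring
  have key : ∀ t : ℝ, 0 ≤ Q A N d * (t * t) + (2 * B) * t + Q A N c := by
    intro t
    have h0 := hA N (fun i => c i + t * d i)
    have expand : Q A (N) (fun i => c i + t * d i)
        = Q A N c + 2 * B * t + Q A N d * (t * t) := by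
      unfold Q
      have hterm : ∀ i j : ℕ, (c i + t * d i) * (c j + t * d j) * A i j
          = c i * c j * A i j + t * (d i * c j * A i j) + t * (c i * d j * A i j)
            + (t * t) * (d i * d j * A i j) := by intro i j; ring
      simp_rw [hterm, Finset.sum_add_distrib, ← Finset.mul_sum]
      rw [swap, ← hB]
      ring
    rw [expand] at h0
    linarith
  have hd := discrim_le_zero key
  rw [discrim] at hd
  nlinarith [hd]

lemma diag_nonneg {A : ℕ → ℕ → ℝ} (hA : PSD A) (i : ℕ) : 0 ≤ A i i := by
  have := hA (i + 1) (fun n => if n = i then 1 else 0)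
  rwa [Q_single (Nat.lt_succ_self i)] at this

lemma entry_cs {A : ℕ → ℕ → ℝ} (hA : PSD A) (hS : IsSym A) (i j : ℕ) :
    (A i j) ^ 2 ≤ A i i * A j j := by
  set N := max i j + 1 with hN
  have hi : i < N := lt_of_le_of_lt (le_max_left i j) (Nat.lt_succ_self _)
  have hj : j < N := lt_of_le_of_lt (le_max_right i j) (Nat.lt_succ_self _)
  have h := psd_cs hA hS N (fun n => if n = i then 1 else 0) (fun n => if n = j then 1 else 0)
  rw [Q_single hi, Q_single hj] at h
  have collapse : ∑ a ∈ Finset.range N, ∑ b ∈ Finset.range N,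
      (if a = i then (1:ℝ) else 0) * (if b = j then 1 else 0) * A a b = A i j := by
    rw [Finset.sum_eq_single i]
    · rw [Finset.sum_eq_single j]
      · simp
      · intro b _ hb; simp [hb]
      · intro h; exact absurd (Finset.mem_range.2 hj) h
    · intro a _ ha; simp [ha]
    · intro h; exact absurd (Finset.mem_range.2 hi) h
  rwa [collapse] at h

lemma row_zero {A : ℕ → ℕ → ℝ} (hA : PSD A) (hS : IsSym A) {i : ℕ} (h : A i i = 0) (j : ℕ) :
    A i j = 0 := by
  have h1 := entry_cs hA hS i j
  rw [h, zero_mul] at h1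
  have h2 : A i j ^ 2 = 0 := le_antisymm h1 (sq_nonneg _)
  exact (pow_eq_zero_iff two_ne_zero).mp h2

/-- One pivoted Gram–Schmidt step preserves positive semidefiniteness. -/
lemma step_psd {A : ℕ → ℕ → ℝ} (hA : PSD A) (hS : IsSym A) (m : ℕ) :
    PSD (fun i j => A i j - A m i * A m j / A m m) := by
  intro N c
  have expand : Q (fun i j => A i j - A m i * A m j / A m m) N c
      = Q A N c - (∑ i ∈ Finset.range N, c i * A m i) ^ 2 / A m m := by
    unfold Q
    have hterm : ∀ i j : ℕ, c i * c j * (A i j - A m i * A m j / A m m)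
        = c i * c j * A i j - (c i * A m i) * (c j * A m j) / A m m := by
      intro i j; ring
    simp_rw [hterm, Finset.sum_sub_distrib, ← Finset.sum_div, ← Finset.mul_sum,
      ← Finset.sum_mul]
    rw [sq]
  rw [expand]
  rcases (diag_nonneg hA m).eq_or_lt with hm | hm
  · have hz : ∀ i, A m i = 0 := row_zero hA hS hm.symm
    simp only [hz, mul_zero, Finset.sum_const_zero]
    simpa using hA N c
  · -- Cauchy-Schwarz against the delta at m
    set M := max N (m + 1) with hM
    set c' : ℕ → ℝ := fun i => if i < N then c i else 0 with hc'
    have hQc' : Q A M c' = Q A N c := by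
      rw [Q_mono (fun i hi => by simp [hc', Nat.not_lt.2 hi]) (le_max_left _ _)]
      unfold Q
      refine Finset.sum_congr rfl fun i hi => Finset.sum_congr rfl fun j hj => ?_
      simp [hc', Finset.mem_range.1 hi, Finset.mem_range.1 hj]
    have hmM : m < M := lt_of_lt_of_le (Nat.lt_succ_self m) (le_max_right _ _)
    have hB := psd_cs hA hS M c' (fun n => if n = m then 1 else 0)
    rw [hQc', Q_single hmM] at hB
    have hcollapse : ∑ i ∈ Finset.range M, ∑ j ∈ Finset.range M,
        c' i * (if j = m then (1:ℝ) else 0) * A i j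
        = ∑ i ∈ Finset.range N, c i * A m i := by
      have inner : ∀ i : ℕ, ∑ j ∈ Finset.range M,
          c' i * (if j = m then (1:ℝ) else 0) * A i j = c' i * A i m := by
        intro i
        rw [Finset.sum_eq_single m]
        · simp
        · intro j _ hj; simp [hj]
        · intro h; exact absurd (Finset.mem_range.2 hmM) h
      simp_rw [inner]
      rw [← Finset.sum_subset (Finset.range_subset_range.2 (le_max_left N (m+1)))]
      · refine Finset.sum_congr rfl fun i hi => ?_
        rw [hS i m]
        simp [hc', Finset.mem_range.1 hi]
      · intro i _ hi
        simp [hc', Nat.not_lt.1 (by simpa using hi)]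
    rw [hcollapse] at hB
    rw [sub_nonneg, div_le_iff₀ hm]
    nlinarith [hB]

variable {K : Type*}

/-- The residual matrices of pivoted Gram–Schmidt applied to the field `Z`. -/
noncomputable def Rm (Z : ℕ → ℕ → K → ℝ) : ℕ → ℕ → ℕ → K → ℝ
  | 0, i, j, x => Z i j x
  | (k+1), i, j, x =>
      let m := sInf {n | 0 < Rm Z k n n x}
      Rm Z k i j x - Rm Z k m i x * Rm Z k m j x / Rm Z k m m x

/-- Pivot index at step `k`. -/
noncomputable def piv (Z : ℕ → ℕ → K → ℝ) (k : ℕ) (x : K) : ℕ :=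
  sInf {n | 0 < Rm Z k n n x}

/-- The Cholesky-type vectors: `uv Z k j x` is the `k`-th coordinate of the vector
attached to index `j`. -/
noncomputable def uv (Z : ℕ → ℕ → K → ℝ) (k j : ℕ) (x : K) : ℝ :=
  Rm Z k (piv Z k x) j x / Real.sqrt (Rm Z k (piv Z k x) (piv Z k x) x)

lemma Rm_succ (Z : ℕ → ℕ → K → ℝ) (k i j : ℕ) (x : K) :
    Rm Z (k+1) i j x = Rm Z k i j x -
      Rm Z k (piv Z k x) i x * Rm Z k (piv Z k x) j x / Rm Z k (piv Z k x) (piv Z k x) x := rfl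

section Pointwise

variable {Z : ℕ → ℕ → K → ℝ} {x : K}
  (hp : PSD (fun i j => Z i j x)) (hs : IsSym (fun i j => Z i j x))

include hp hs

lemma Rm_psd_sym (k : ℕ) :
    PSD (fun i j => Rm Z k i j x) ∧ IsSym (fun i j => Rm Z k i j x) := by
  induction k with
  | zero => exact ⟨hp, hs⟩
  | succ k ih =>
    refine ⟨step_psd ih.1 ih.2 _, fun i j => ?_⟩
    show Rm Z (k+1) i j x = Rm Z (k+1) j i x
    have h2 : Rm Z k i j x = Rm Z k j i x := ih.2 i j
    rw [Rm_succ, Rm_succ, h2]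
    ring

/-- If there is no pivot at step `k`, the whole residual vanishes. -/
lemma nopiv_allzero {k : ℕ} (h : ¬ {n | 0 < Rm Z k n n x}.Nonempty) (i j : ℕ) :
    Rm Z k i j x = 0 := by
  obtain ⟨hP, hSym⟩ := Rm_psd_sym hp hs k
  have hdiag : Rm Z k i i x = 0 := by
    have h1 := diag_nonneg hP i
    have h2 : ¬ 0 < Rm Z k i i x := fun hc => h ⟨i, hc⟩
    exact le_antisymm (not_lt.mp h2) h1
  exact row_zero hP hSym hdiag j

/-- If there is a pivot at step `k`, the pivot diagonal entry is positive. -/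
lemma piv_pos {k : ℕ} (h : {n | 0 < Rm Z k n n x}.Nonempty) :
    0 < Rm Z k (piv Z k x) (piv Z k x) x := Nat.sInf_mem h

lemma uv_mul (k i j : ℕ) :
    uv Z k i x * uv Z k j x =
      Rm Z k (piv Z k x) i x * Rm Z k (piv Z k x) j x / Rm Z k (piv Z k x) (piv Z k x) x := by
  by_cases h : {n | 0 < Rm Z k n n x}.Nonempty
  · have hpos := piv_pos hp hs h
    unfold uv
    rw [div_mul_div_comm, Real.mul_self_sqrt hpos.le]
  · have hz := nopiv_allzero hp hs h
    simp [uv, hz]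

lemma Rm_succ' (k i j : ℕ) :
    Rm Z (k+1) i j x = Rm Z k i j x - uv Z k i x * uv Z k j x := by
  rw [Rm_succ, uv_mul hp hs]

/-- Telescoping sum. -/
lemma telescope (k i j : ℕ) :
    Z i j x = (∑ l ∈ Finset.range k, uv Z l i x * uv Z l j x) + Rm Z k i j x := by
  induction k with
  | zero => simp [Rm]
  | succ k ih =>
    rw [Finset.sum_range_succ, Rm_succ' hp hs]
    linarith [ih]

/-- Zero diagonal entries persist. -/
lemma diag_zero_succ {k i : ℕ} (h : Rm Z k i i x = 0) : Rm Z (k+1) i i x = 0 := by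
  obtain ⟨hP, hSym⟩ := Rm_psd_sym hp hs k
  have hrow : Rm Z k (piv Z k x) i x = 0 := by
    have hsy : Rm Z k (piv Z k x) i x = Rm Z k i (piv Z k x) x := hSym (piv Z k x) i
    rw [hsy]; exact row_zero hP hSym h (piv Z k x)
  rw [Rm_succ, h, hrow]
  ring

lemma diag_zero_persist {k l i : ℕ} (hkl : k ≤ l) (h : Rm Z k i i x = 0) :
    Rm Z l i i x = 0 := by
  induction l, hkl using Nat.le_induction with
  | base => exact h
  | succ l hl ih => exact diag_zero_succ hp hs ih

/-- The pivot row is annihilated at the next step, and stays zero forever. -/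
lemma piv_row_zero {k : ℕ} (h : {n | 0 < Rm Z k n n x}.Nonempty) :
    Rm Z (k+1) (piv Z k x) (piv Z k x) x = 0 := by
  have hpos := piv_pos hp hs h
  rw [Rm_succ]
  field_simp
  ring

lemma piv_diag_zero_later {k l : ℕ} (h : {n | 0 < Rm Z k n n x}.Nonempty) (hkl : k < l) :
    Rm Z l (piv Z k x) (piv Z k x) x = 0 :=
  diag_zero_persist hp hs hkl (piv_row_zero hp hs h)

/-- Later coordinates vanish on earlier pivots. -/
lemma uv_piv_later {k l : ℕ} (h : {n | 0 < Rm Z k n n x}.Nonempty) (hkl : k < l) :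
    uv Z l (piv Z k x) x = 0 := by
  obtain ⟨hP, hSym⟩ := Rm_psd_sym hp hs l
  have hd : Rm Z l (piv Z k x) (piv Z k x) x = 0 := piv_diag_zero_later hp hs h hkl
  have hrow : Rm Z l (piv Z l x) (piv Z k x) x = 0 := by
    have hsy : Rm Z l (piv Z l x) (piv Z k x) x = Rm Z l (piv Z k x) (piv Z l x) x :=
      hSym (piv Z l x) (piv Z k x)
    rw [hsy]; exact row_zero hP hSym hd (piv Z l x)
  simp [uv, hrow]

lemma uv_piv_self {k : ℕ} (h : {n | 0 < Rm Z k n n x}.Nonempty) :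
    uv Z k (piv Z k x) x = Real.sqrt (Rm Z k (piv Z k x) (piv Z k x) x) := by
  unfold uv
  exact Real.div_sqrt

end Pointwise

section Rank

variable {Z : ℕ → ℕ → K → ℝ} {x : K}

/-- If pivots exist at every step up to `k`, some truncation has rank at least `k+1`. -/
lemma rank_ge (hp : PSD fun i j => Z i j x) (hs : IsSym fun i j => Z i j x) (k : ℕ)
    (hpiv : ∀ l ≤ k, {n | 0 < Rm Z l n n x}.Nonempty) :
    ∃ N : ℕ, k + 1 ≤ (Matrix.of fun i j : Fin N => Z i j x).rank := by
  classical
  set N := (Finset.range (k+1)).sup (fun l => piv Z l x) + 1 with hN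
  refine ⟨N, ?_⟩
  have hfN : ∀ a : Fin (k+1), piv Z (a : ℕ) x < N :=
    fun a => Nat.lt_succ_of_le (Finset.le_sup (f := fun l => piv Z l x) (Finset.mem_range.2 a.isLt))
  set f : Fin (k+1) → Fin N := fun a => ⟨piv Z (a : ℕ) x, hfN a⟩ with hf
  set V : Matrix (Fin (k+1)) (Fin (k+1)) ℝ :=
    Matrix.of (fun l a : Fin (k+1) => uv Z (l : ℕ) (piv Z (a : ℕ) x) x) with hV
  have hVd : ∀ a : Fin (k+1), 0 < V a a := by
    intro a
    have hpos := piv_pos (hp := hp) (hs := hs) (hpiv (a : ℕ) (by omega))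
    show 0 < uv Z (a : ℕ) (piv Z (a : ℕ) x) x
    rw [uv_piv_self (hp := hp) (hs := hs) (hpiv (a : ℕ) (by omega))]
    exact Real.sqrt_pos.2 hpos
  have hVu : ∀ l a : Fin (k+1), (a : Fin (k+1)) < l → V l a = 0 := by
    intro l a hal
    show uv Z (l : ℕ) (piv Z (a : ℕ) x) x = 0
    exact uv_piv_later hp hs (hpiv (a : ℕ) (by omega)) (by exact_mod_cast hal)
  have hdet : V.det ≠ 0 := by
    have htri : V.BlockTriangular id := fun i j hij => hVu i j hij
    rw [Matrix.det_of_upperTriangular htri]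
    exact ne_of_gt (Finset.prod_pos fun a _ => hVd a)
  have hVrank : V.rank = k + 1 := by
    rw [Matrix.rank_of_isUnit V ((Matrix.isUnit_iff_isUnit_det V).2 (isUnit_iff_ne_zero.2 hdet))]
    simp
  set G := (Matrix.of fun i j : Fin N => Z i j x) with hG
  set E : Matrix (Fin (k+1)) (Fin N) ℝ :=
    Matrix.of (fun a i => if i = f a then (1:ℝ) else 0) with hE
  have hEG : ∀ (a : Fin (k+1)) (j : Fin N), (E * G) a j = G (f a) j := by
    intro a j
    rw [Matrix.mul_apply]
    rw [Finset.sum_eq_single (f a)]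
    · simp [hE]
    · intro b _ hb; simp [hE, hb]
    · intro h; exact absurd (Finset.mem_univ _) h
  have hRHS : ∀ a b : Fin (k+1), (E * G * Eᵀ) a b = G (f a) (f b) := by
    intro a b
    rw [Matrix.mul_apply]
    rw [Finset.sum_eq_single (f b)]
    · rw [hEG]; simp [hE]
    · intro c _ hc; simp [hE, hc]
    · intro h; exact absurd (Finset.mem_univ _) h
  have hM : Vᵀ * V = E * G * Eᵀ := by
    ext a b
    rw [hRHS a b, Matrix.mul_apply]
    have hend : Rm Z (k+1) (piv Z (a : ℕ) x) (piv Z (b : ℕ) x) x = 0 := by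
      obtain ⟨hP, hSym⟩ := Rm_psd_sym hp hs (k+1)
      have hd : Rm Z (k+1) (piv Z (a : ℕ) x) (piv Z (a : ℕ) x) x = 0 :=
        piv_diag_zero_later hp hs (hpiv (a : ℕ) (by omega)) (by omega)
      exact row_zero hP hSym hd _
    have htel := telescope hp hs (k+1) (piv Z (a : ℕ) x) (piv Z (b : ℕ) x)
    rw [hend, add_zero] at htel
    show (∑ l : Fin (k+1), V l a * V l b) = G (f a) (f b)
    have : G (f a) (f b) = Z (piv Z (a : ℕ) x) (piv Z (b : ℕ) x) x := rfl
    rw [this, htel]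
    exact Fin.sum_univ_eq_sum_range
      (fun l => uv Z l (piv Z (a : ℕ) x) x * uv Z l (piv Z (b : ℕ) x) x) (k+1)
  have chain : (k : ℕ) + 1 ≤ G.rank := by
    calc (k : ℕ) + 1 = V.rank := hVrank.symm
    _ = (Vᵀ * V).rank := (Matrix.rank_transpose_mul_self V).symm
    _ = (E * G * Eᵀ).rank := by rw [hM]
    _ ≤ (E * G).rank := Matrix.rank_mul_le_left (E * G) Eᵀ
    _ ≤ G.rank := Matrix.rank_mul_le_right E G
  exact chain

end Rank

section Terminate

variable {Z : ℕ → ℕ → K → ℝ} {x : K}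

lemma allzero_succ (h : ∀ a b, Rm Z l a b x = 0) (a b : ℕ) : Rm Z (l+1) a b x = 0 := by
  simp [Rm_succ, h]

lemma allzero_persist {l l' : ℕ} (hll : l ≤ l') (h : ∀ a b, Rm Z l a b x = 0) :
    ∀ a b, Rm Z l' a b x = 0 := by
  induction l', hll using Nat.le_induction with
  | base => exact h
  | succ l' hl ih => exact allzero_succ ih

/-- If the residual at step `k` is not identically zero, pivots exist at every step `≤ k`. -/
lemma piv_of_ne (hp : PSD fun i j => Z i j x) (hs : IsSym fun i j => Z i j x) {k i j : ℕ}
    (h : Rm Z k i j x ≠ 0) : ∀ l ≤ k, {n | 0 < Rm Z l n n x}.Nonempty := by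
  intro l hl
  by_contra hc
  exact h (allzero_persist hl (nopiv_allzero hp hs hc) i j)

/-- Termination: the residual vanishes after `p` steps, given the rank bound `p`. -/
lemma Rm_p_zero (hp : PSD fun i j => Z i j x) (hs : IsSym fun i j => Z i j x) (p : ℕ)
    (hrank : ∀ N : ℕ, (Matrix.of fun i j : Fin N => Z i j x).rank ≤ p) (i j : ℕ) :
    Rm Z p i j x = 0 := by
  by_contra h
  have hpiv : ∀ l ≤ p, {n | 0 < Rm Z l n n x}.Nonempty := piv_of_ne hp hs h
  obtain ⟨N, hN⟩ := rank_ge hp hs p hpiv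
  exact absurd (le_trans hN (hrank N)) (by omega)

end Terminate

section Meas

variable {K : Type*} [MeasurableSpace K] {Z : ℕ → ℕ → K → ℝ}

lemma meas_comp_nat {f : ℕ → K → ℝ} (hf : ∀ n, Measurable (f n)) {g : K → ℕ}
    (hg : Measurable g) : Measurable fun x => f (g x) x := by
  have h1 : Measurable fun q : K × ℕ => f q.2 q.1 :=
    measurable_from_prod_countable_left fun n => hf n
  exact h1.comp (measurable_id.prodMk hg)

lemma piv_meas {k : ℕ} (hR : ∀ i j, Measurable fun x => Rm Z k i j x) :
    Measurable fun x => piv Z k x := by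
  apply measurable_to_countable'
  intro n
  have hset : (fun x => piv Z k x) ⁻¹' {n} =
      ({x | 0 < Rm Z k n n x} ∩ ⋂ m ∈ Finset.range n, {x | ¬ 0 < Rm Z k m m x}) ∪
      ({x : K | n = 0} ∩ ⋂ m : ℕ, {x | ¬ 0 < Rm Z k m m x}) := by
    ext x
    simp only [Set.mem_preimage, Set.mem_singleton_iff, Set.mem_union, Set.mem_inter_iff,
      Set.mem_iInter, Set.mem_setOf_eq, Finset.mem_range]
    constructor
    · intro h
      by_cases hS : {m | 0 < Rm Z k m m x}.Nonempty
      · left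
        refine ⟨h ▸ Nat.sInf_mem hS, fun m hm hc => ?_⟩
        have : m ∉ {m | 0 < Rm Z k m m x} := Nat.notMem_of_lt_sInf (by rw [piv] at h; omega)
        exact this hc
      · right
        have hempty : {m | 0 < Rm Z k m m x} = ∅ := Set.not_nonempty_iff_eq_empty.1 hS
        have h0 : piv Z k x = 0 := by rw [piv, hempty]; exact Nat.sInf_empty
        refine ⟨by omega, fun m hc => hS ⟨m, hc⟩⟩
    · rintro (⟨hn, hmin⟩ | ⟨hn0, hall⟩)
      · refine le_antisymm (Nat.sInf_le hn) (not_lt.1 fun hlt => ?_)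
        have hm := Nat.sInf_mem (⟨n, hn⟩ : Set.Nonempty {m | 0 < Rm Z k m m x})
        exact hmin _ hlt hm
      · have hempty : {m | 0 < Rm Z k m m x} = ∅ :=
          Set.eq_empty_iff_forall_notMem.2 fun m hc => hall m hc
        rw [piv, hempty, Nat.sInf_empty]
        omega
  rw [hset]
  refine MeasurableSet.union ?_ ?_
  · exact (measurableSet_lt measurable_const (hR n n)).inter
      (MeasurableSet.biInter (Set.to_countable _)
        (fun m _ => (measurableSet_lt measurable_const (hR m m)).compl))
  · exact (MeasurableSet.const _).inter
      (MeasurableSet.iInter fun m => (measurableSet_lt measurable_const (hR m m)).compl)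

lemma Rm_meas (hmeas : ∀ i j, Measurable (Z i j)) :
    ∀ k i j, Measurable fun x => Rm Z k i j x := by
  intro k
  induction k with
  | zero => exact fun i j => hmeas i j
  | succ k ih =>
    intro i j
    have hpiv := piv_meas (Z := Z) ih
    have h1 : Measurable fun x => Rm Z k (piv Z k x) i x :=
      meas_comp_nat (fun n => ih n i) hpiv
    have h2 : Measurable fun x => Rm Z k (piv Z k x) j x :=
      meas_comp_nat (fun n => ih n j) hpiv
    have h3 : Measurable fun x => Rm Z k (piv Z k x) (piv Z k x) x :=
      meas_comp_nat (fun n => ih n n) hpiv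
    simp only [Rm_succ]
    exact (ih i j).sub ((h1.mul h2).div h3)

lemma uv_meas (hmeas : ∀ i j, Measurable (Z i j)) (k j : ℕ) :
    Measurable fun x => uv Z k j x := by
  have hR := Rm_meas hmeas k
  have hpiv := piv_meas (Z := Z) hR
  have h1 : Measurable fun x => Rm Z k (piv Z k x) j x :=
    meas_comp_nat (fun n => hR n j) hpiv
  have h3 : Measurable fun x => Rm Z k (piv Z k x) (piv Z k x) x :=
    meas_comp_nat (fun n => hR n n) hpiv
  exact h1.div (Real.continuous_sqrt.measurable.comp h3)

end Meas

end Stmt6Aux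

open scoped RealInnerProductSpace

/-- Measurable square-root field (Proposition 2.9, 'only if' direction, stated pointwise):
a measurable field of infinite positive semidefinite Gram matrices of rank at most `p` admits
a measurable field of `ℝ^p`-valued vectors realizing it, whose coordinates beyond the pointwise
index vanish. -/
theorem stmt6 {K : Type*} [MeasurableSpace K] (p : ℕ) (Z : ℕ → ℕ → K → ℝ)
    (hmeas : ∀ i j, Measurable (Z i j))
    (hpsd : ∀ (x : K) (N : ℕ), (Matrix.of fun i j : Fin N => Z i j x).PosSemidef)
    (hrank : ∀ (x : K) (N : ℕ), (Matrix.of fun i j : Fin N => Z i j x).rank ≤ p) :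
    ∃ ζ : ℕ → K → EuclideanSpace ℝ (Fin p),
      (∀ i, Measurable (ζ i)) ∧
      (∀ (x : K) (i j : ℕ), Z i j x = ⟪ζ i x, ζ j x⟫) ∧
      (∀ (x : K) (j : ℕ) (k : Fin p),
        sSup {n : ℕ | ∃ N : ℕ, n = (Matrix.of fun i j : Fin N => Z i j x).rank} ≤ (k : ℕ) →
        ζ j x k = 0) := by
  classical
  have hp : ∀ x, Stmt6Aux.PSD fun i j => Z i j x := by
    intro x N c
    have h := (hpsd x N).dotProduct_mulVec_nonneg (fun i : Fin N => c i)
    simp only [dotProduct, Matrix.mulVec, Matrix.of_apply, star_trivial,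
      Pi.star_apply] at h
    show (0:ℝ) ≤ ∑ i ∈ Finset.range N, ∑ j ∈ Finset.range N, c i * c j * Z i j x
    calc (0:ℝ) ≤ ∑ i : Fin N, c (i:ℕ) * ∑ j : Fin N, Z (i:ℕ) (j:ℕ) x * c (j:ℕ) := h
    _ = ∑ i : Fin N, ∑ j : Fin N, c (i:ℕ) * c (j:ℕ) * Z (i:ℕ) (j:ℕ) x := by
        refine Finset.sum_congr rfl fun i _ => ?_
        rw [Finset.mul_sum]
        exact Finset.sum_congr rfl fun j _ => by ring
    _ = ∑ i ∈ Finset.range N, ∑ j ∈ Finset.range N, c i * c j * Z i j x := by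
        rw [← Fin.sum_univ_eq_sum_range
          (fun i => ∑ j ∈ Finset.range N, c i * c j * Z i j x) N]
        refine Finset.sum_congr rfl fun i _ => ?_
        exact Fin.sum_univ_eq_sum_range (fun j => c (i:ℕ) * c j * Z (i:ℕ) j x) N
  have hs : ∀ x, Stmt6Aux.IsSym fun i j => Z i j x := by
    intro x i j
    have hi : i < max i j + 1 := by omega
    have hj : j < max i j + 1 := by omega
    have h := (hpsd x (max i j + 1)).1.apply ⟨i, hi⟩ ⟨j, hj⟩
    simpa using h.symm
  refine ⟨fun j x => (WithLp.equiv 2 (Fin p → ℝ)).symm fun k : Fin p =>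
      Stmt6Aux.uv Z (k:ℕ) j x, ?_, ?_, ?_⟩
  · intro i
    have hm : Measurable fun x => (fun k : Fin p => Stmt6Aux.uv Z (k:ℕ) i x) :=
      measurable_pi_lambda _ fun k => Stmt6Aux.uv_meas hmeas (k:ℕ) i
    exact (MeasurableEquiv.toLp 2 (Fin p → ℝ)).measurable.comp hm
  · intro x i j
    have hZ := Stmt6Aux.telescope (hp x) (hs x) p i j
    rw [Stmt6Aux.Rm_p_zero (hp x) (hs x) p (hrank x) i j, add_zero] at hZ
    rw [hZ, PiLp.inner_apply]
    simp only [RCLike.inner_apply, conj_trivial, WithLp.equiv_symm_apply, PiLp.toLp_apply]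
    exact (Fin.sum_univ_eq_sum_range
      (fun l => Stmt6Aux.uv Z l i x * Stmt6Aux.uv Z l j x) p).symm.trans
      (Finset.sum_congr rfl fun _ _ => mul_comm _ _)
  · intro x j k hk
    show Stmt6Aux.uv Z (k:ℕ) j x = 0
    by_cases hpk : {n | 0 < Stmt6Aux.Rm Z (k:ℕ) n n x}.Nonempty
    · exfalso
      have hpiv : ∀ l ≤ (k:ℕ), {n | 0 < Stmt6Aux.Rm Z l n n x}.Nonempty := by
        intro l hl
        by_contra hc
        have hz := Stmt6Aux.nopiv_allzero (hp x) (hs x) hc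
        have hzz := Stmt6Aux.allzero_persist hl hz
        obtain ⟨n, hn⟩ := hpk
        have hn' : 0 < Stmt6Aux.Rm Z (k:ℕ) n n x := hn
        rw [hzz n n] at hn'
        exact lt_irrefl 0 hn'
      obtain ⟨N, hN⟩ := Stmt6Aux.rank_ge (hp x) (hs x) (k:ℕ) hpiv
      have hbdd : BddAbove {n : ℕ | ∃ N : ℕ, n = (Matrix.of fun i j : Fin N => Z i j x).rank} :=
        ⟨p, fun n hn => by obtain ⟨N', rfl⟩ := hn; exact hrank x N'⟩
      have hmem : (Matrix.of fun i j : Fin N => Z i j x).rank ∈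
          {n : ℕ | ∃ N : ℕ, n = (Matrix.of fun i j : Fin N => Z i j x).rank} := ⟨N, rfl⟩
      have hle := le_csSup hbdd hmem
      have : (k:ℕ) + 1 ≤ (k:ℕ) := le_trans hN (le_trans hle hk)
      omega
    · have hz := Stmt6Aux.nopiv_allzero (hp x) (hs x) hpk
      simp [Stmt6Aux.uv, hz]
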